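/- arXiv:2305.19277 — 3 statements merged into one kernel-verified Lean document; each statement's English description precedes it below -/
import Mathlib

section
/- Let G be a starlike graph with clique partition (V_0, V_1, …, V_t) and let S ⊆ V(G). Then every vertex v ∈ ⟨S⟩ − S belongs to C'_0, and v is an internal vertex of an induced (u,u')-path of G such that u ∈ S ∩ Z ∩ N(v) and u' ∈ ⟨S⟩. -/
open SimpleGraph

variable {V : Type*}

/-- The closed neighborhood of a vertex. -/
def closedNbhd (G : SimpleGraph V) (v : V) : Set V := insert v (G.neighborSet v)

/-- A vertex is simplicial if its closed neighborhood induces a complete graph. -/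
def IsSimplicial (G : SimpleGraph V) (v : V) : Prop :=
  ∀ a ∈ closedNbhd G v, ∀ b ∈ closedNbhd G v, a ≠ b → G.Adj a b

/-- `Z`, the set of simplicial vertices of `G`. -/
def simplicialSet (G : SimpleGraph V) : Set V := {v | IsSimplicial G v}

/-- `N(T)`, the union of open neighborhoods of vertices of `T`. -/
def nbhdSet (G : SimpleGraph V) (T : Set V) : Set V := ⋃ v ∈ T, G.neighborSet v

/-- An independent set of vertices. -/
def IsIndepSet' (G : SimpleGraph V) (T : Set V) : Prop :=
  ∀ u ∈ T, ∀ v ∈ T, ¬ G.Adj u v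

/-- The difference `d(T) = |T| - |N(T)|` of a set of vertices. -/
noncomputable def indepDiff (G : SimpleGraph V) (T : Set V) : ℤ :=
  (T.ncard : ℤ) - ((nbhdSet G T).ncard : ℤ)

/-- The critical independence difference `d_c(G)`. -/
noncomputable def critIndepDiff (G : SimpleGraph V) : ℤ :=
  sSup {d : ℤ | ∃ T : Set V, IsIndepSet' G T ∧ d = indepDiff G T}

/-- A walk is an induced path if it is a path and no two non-consecutive vertices
of it are adjacent. -/
def IsInducedPath (G : SimpleGraph V) {a b : V} (p : G.Walk a b) : Prop :=
  p.IsPath ∧ ∀ (i j : ℕ) (hi : i < p.support.length) (hj : j < p.support.length),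
    i + 1 < j → ¬ G.Adj (p.support.get ⟨i, hi⟩) (p.support.get ⟨j, hj⟩)

/-- A set is monophonically convex if it contains every vertex of every induced path
joining two of its vertices. -/
def MonoConvex (G : SimpleGraph V) (S : Set V) : Prop :=
  ∀ ⦃a b : V⦄, a ∈ S → b ∈ S → ∀ p : G.Walk a b, IsInducedPath G p →
    ∀ w ∈ p.support, w ∈ S

/-- The monophonic convex hull of `S`: the smallest monophonically convex set containing `S`. -/
def monoHull (G : SimpleGraph V) (S : Set V) : Set V :=
  ⋂₀ {T : Set V | S ⊆ T ∧ MonoConvex G T}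

/-- A set is monophonically convexly independent if no member is in the hull
of the others. -/
def MConvexIndep (G : SimpleGraph V) (S : Set V) : Prop :=
  ∀ v ∈ S, v ∉ monoHull G (S \ {v})

/-- The monophonic rank: the largest size of an m-convexly independent set. -/
noncomputable def monoRank (G : SimpleGraph V) : ℕ :=
  sSup {n : ℕ | ∃ S : Set V, MConvexIndep G S ∧ n = S.ncard}

/-- A starlike partition of a graph: a partition of the vertex set into cliques
`V_0, V_1, …, V_t` such that `V_0` is a maximal clique and, for `i ≥ 1`,
all vertices of `V_i` have the same closed neighborhood outside `V_i`,
contained in `V_0`. -/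
structure IsStarlikePartition (G : SimpleGraph V) (t : ℕ) (Vp : Fin (t+1) → Set V) : Prop where
  nonempty : ∀ i, (Vp i).Nonempty
  disjoint : ∀ i j, i ≠ j → Disjoint (Vp i) (Vp j)
  covers : ∀ v : V, ∃ i, v ∈ Vp i
  cliques : ∀ i, G.IsClique (Vp i)
  maximal : ∀ T : Set V, G.IsClique T → Vp 0 ⊆ T → T ⊆ Vp 0
  nbhd_eq : ∀ i : Fin (t+1), i ≠ 0 → ∀ u ∈ Vp i, ∀ v ∈ Vp i,
    closedNbhd G u \ Vp i = closedNbhd G v \ Vp i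
  nbhd_sub : ∀ i : Fin (t+1), i ≠ 0 → ∀ u ∈ Vp i, closedNbhd G u \ Vp i ⊆ Vp 0

/-- `X_i`: the maximal clique containing `V_i` (`X_0 = V_0`; for `i ≥ 1` it is
the closed neighborhood of any vertex of `V_i`). -/
def Xset (G : SimpleGraph V) {t : ℕ} (Vp : Fin (t+1) → Set V) (i : Fin (t+1)) : Set V :=
  if i = 0 then Vp 0 else ⋃ u ∈ Vp i, closedNbhd G u

/-- `C_i = X_i ∩ Z`. -/
def Cset (G : SimpleGraph V) {t : ℕ} (Vp : Fin (t+1) → Set V) (i : Fin (t+1)) : Set V :=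
  Xset G Vp i ∩ simplicialSet G

/-- `C'_i = X_i − C_i`. -/
def Cset' (G : SimpleGraph V) {t : ℕ} (Vp : Fin (t+1) → Set V) (i : Fin (t+1)) : Set V :=
  Xset G Vp i \ Cset G Vp i

/-- `Y_i`: the union of the sets `C_j`, over `j ≠ i` with `C'_j ⊆ C'_i`. -/
def Yset (G : SimpleGraph V) {t : ℕ} (Vp : Fin (t+1) → Set V) (i : Fin (t+1)) : Set V :=
  ⋃ j ∈ {j : Fin (t+1) | j ≠ i ∧ Cset' G Vp j ⊆ Cset' G Vp i}, Cset G Vp j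

open scoped Classical in
/-- The vertex set of the split graph `G_i`: if `|N(Y_i) − Y_i| = |C'_i| − 1` and
`|Y_i| ≥ |C'_i| − 1` then `(C'_i − {x}) ∪ Y_i` where `{x} = C'_i − N(Y_i)`
(so that `C'_i − {x} = C'_i ∩ N(Y_i)`), otherwise `C'_i ∪ Y_i`. -/
noncomputable def Wset (G : SimpleGraph V) {t : ℕ} (Vp : Fin (t+1) → Set V)
    (i : Fin (t+1)) : Set V :=
  if (((nbhdSet G (Yset G Vp i) \ Yset G Vp i).ncard : ℤ) = ((Cset' G Vp i).ncard : ℤ) - 1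
      ∧ ((Yset G Vp i).ncard : ℤ) ≥ ((Cset' G Vp i).ncard : ℤ) - 1)
  then (Cset' G Vp i ∩ nbhdSet G (Yset G Vp i)) ∪ Yset G Vp i
  else Cset' G Vp i ∪ Yset G Vp i

/-- The induced subgraph on `W` with all edges inside `Y` deleted. -/
def inducedMinusY (G : SimpleGraph V) (W Y : Set V) : SimpleGraph ↥W where
  Adj a b := G.Adj a b ∧ ¬((a : V) ∈ Y ∧ (b : V) ∈ Y)
  symm := by
    constructor
    intro a b h
    exact ⟨h.1.symm, fun hc => h.2 ⟨hc.2, hc.1⟩⟩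
  loopless := by
    constructor
    intro a h
    exact G.irrefl h.1

/-- The split graph `G_i = G[W_i] − E(G[Y_i])`. -/
noncomputable def Gsplit (G : SimpleGraph V) {t : ℕ} (Vp : Fin (t+1) → Set V)
    (i : Fin (t+1)) : SimpleGraph ↥(Wset G Vp i) :=
  inducedMinusY G (Wset G Vp i) (Yset G Vp i)

lemma internal_nbrs {G : SimpleGraph V} {a b : V} {p : G.Walk a b} (hp : IsInducedPath G p)
    {w : V} (hw : w ∈ p.support) (hwa : w ≠ a) (hwb : w ≠ b) :
    ∃ x y, G.Adj x w ∧ G.Adj w y ∧ ¬ G.Adj x y ∧ x ≠ y ∧ x ∈ p.support ∧ y ∈ p.support := by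
  obtain ⟨⟨k, hk⟩, hkw⟩ := List.mem_iff_get.mp hw
  have hpos : 0 < p.support.length := by rw [p.length_support]; omega
  have ha : p.support.get ⟨0, hpos⟩ = a := by
    rw [List.get_mk_zero]; exact p.head_support
  have hb : p.support.get ⟨p.support.length - 1, by omega⟩ = b := by
    have := p.getLast_support; rw [List.getLast_eq_getElem] at this; simpa using this
  have hk0 : k ≠ 0 := by rintro rfl; exact hwa (hkw.symm.trans ha)
  have hklast : k ≠ p.support.length - 1 := by
    rintro rfl; exact hwb (hkw.symm.trans hb)
  have hchain : ∀ i (h : i < p.support.length - 1), G.Adj (p.support.get ⟨i, by omega⟩)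
      (p.support.get ⟨i + 1, by omega⟩) :=
    fun i h => List.isChain_iff_getElem.mp p.isChain_adj_support i (by omega)
  have h1 : k - 1 < p.support.length - 1 := by omega
  have h2 : k < p.support.length - 1 := by omega
  have hadj1 := hchain (k - 1) h1
  have hadj2 := hchain k h2
  have hkk : p.support.get ⟨k - 1 + 1, by omega⟩ = w := by
    rw [← hkw]; congr 1; simp only [Fin.mk.injEq]; omega
  rw [hkk] at hadj1
  rw [hkw] at hadj2
  refine ⟨p.support.get ⟨k - 1, by omega⟩, p.support.get ⟨k + 1, by omega⟩, hadj1, hadj2, ?_, ?_,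
    List.get_mem _ _, List.get_mem _ _⟩
  · exact hp.2 (k - 1) (k + 1) (by omega) (by omega) (by omega)
  · intro h
    have := (hp.1.support_nodup.get_inj_iff).mp h
    rw [Fin.mk.injEq] at this
    omega

lemma not_simplicial_of_internal {G : SimpleGraph V} {a b : V} {p : G.Walk a b}
    (hp : IsInducedPath G p) {w : V} (hw : w ∈ p.support) (hwa : w ≠ a) (hwb : w ≠ b) :
    ¬ IsSimplicial G w := by
  obtain ⟨x, y, h1, h2, h3, h4, -, -⟩ := internal_nbrs hp hw hwa hwb
  intro hs
  exact h3 (hs x (Set.mem_insert_iff.mpr (Or.inr h1.symm)) y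
    (Set.mem_insert_iff.mpr (Or.inr h2)) h4)

lemma simplicial_of_not_V0 {G : SimpleGraph V} {t : ℕ} {Vp : Fin (t+1) → Set V}
    (hstar : IsStarlikePartition G t Vp) {v : V} (hv : v ∉ Vp 0) : IsSimplicial G v := by
  obtain ⟨i, hiv⟩ := hstar.covers v
  have hi0 : i ≠ 0 := by rintro rfl; exact hv hiv
  intro a ha b hb hab
  by_cases haV : a ∈ Vp i <;> by_cases hbV : b ∈ Vp i
  · exact hstar.cliques i haV hbV hab
  · have hb' : b ∈ closedNbhd G a \ Vp i := by
      rw [← hstar.nbhd_eq i hi0 v hiv a haV]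
      exact ⟨hb, hbV⟩
    rcases Set.mem_insert_iff.mp hb'.1 with h | h
    · exact absurd h.symm hab
    · exact h
  · have ha' : a ∈ closedNbhd G b \ Vp i := by
      rw [← hstar.nbhd_eq i hi0 v hiv b hbV]
      exact ⟨ha, haV⟩
    rcases Set.mem_insert_iff.mp ha'.1 with h | h
    · exact absurd h hab
    · exact h.symm
  · exact hstar.cliques 0 (hstar.nbhd_sub i hi0 v hiv ⟨ha, haV⟩)
      (hstar.nbhd_sub i hi0 v hiv ⟨hb, hbV⟩) hab

lemma subset_monoHull (G : SimpleGraph V) (S : Set V) : S ⊆ monoHull G S :=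
  fun x hx => Set.mem_sInter.mpr fun _ hT => hT.1 hx

lemma monoConvex_monoHull (G : SimpleGraph V) (S : Set V) : MonoConvex G (monoHull G S) := by
  intro a b ha hb p hp w hw
  exact Set.mem_sInter.mpr fun T hT =>
    hT.2 (Set.mem_sInter.mp ha T hT) (Set.mem_sInter.mp hb T hT) p hp w hw

/-- Lemma 1: in a starlike graph, every vertex `v ∈ ⟨S⟩ − S`
belongs to `C'_0` and is an internal vertex of an induced `(u,u')`-path with
`u ∈ S ∩ Z ∩ N(v)` and `u' ∈ ⟨S⟩`. -/
theorem statement0 [Fintype V] (G : SimpleGraph V) (t : ℕ) (Vp : Fin (t+1) → Set V)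
    (hstar : IsStarlikePartition G t Vp) (S : Set V)
    (v : V) (hv : v ∈ monoHull G S \ S) :
    v ∈ Cset' G Vp 0 ∧
      ∃ (u u' : V) (p : G.Walk u u'), IsInducedPath G p ∧
        v ∈ p.support ∧ v ≠ u ∧ v ≠ u' ∧
        u ∈ S ∧ u ∈ simplicialSet G ∧ u ∈ G.neighborSet v ∧
        u' ∈ monoHull G S := by
    classical
  have hHconv : MonoConvex G (monoHull G S) := monoConvex_monoHull G S
  set P := {w : V | w ∈ Cset' G Vp 0 ∧ ∃ (u u' : V) (q : G.Walk u u'), IsInducedPath G q ∧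
    w ∈ q.support ∧ w ≠ u ∧ w ≠ u' ∧ u ∈ S ∧ u ∈ simplicialSet G ∧ u ∈ G.neighborSet w ∧
    u' ∈ monoHull G S} with hPdef
  have key : monoHull G S ⊆ (S ∪ P) ∩ monoHull G S := by
    apply Set.sInter_subset_of_mem
    constructor
    · exact fun x hx => ⟨Or.inl hx, subset_monoHull G S hx⟩
    · intro a b ha hb p hp w hw
      have hwH : w ∈ monoHull G S := hHconv ha.2 hb.2 p hp w hw
      refine ⟨?_, hwH⟩
      by_cases hwS : w ∈ S
      · exact Or.inl hwS
      by_cases hwa : w = a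
      · exact hwa ▸ ha.1
      by_cases hwb : w = b
      · exact hwb ▸ hb.1
      obtain ⟨x, y, hxw, hwy, hxy, hxney, hxs, hys⟩ := internal_nbrs hp hw hwa hwb
      have hwns : ¬ IsSimplicial G w := not_simplicial_of_internal hp hw hwa hwb
      have hwV0 : w ∈ Vp 0 := by
        by_contra h
        exact hwns (simplicial_of_not_V0 hstar h)
      have hwC' : w ∈ Cset' G Vp 0 := by
        constructor
        · show w ∈ Xset G Vp 0
          simp only [Xset, if_pos rfl]
          exact hwV0
        · intro hc
          exact hwns hc.2
      have main : ∀ u u' : V, G.Adj u w → G.Adj w u' → ¬ G.Adj u u' → u ≠ u' →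
          u ∉ Vp 0 → u ∈ p.support → u' ∈ p.support → w ∈ P := by
        intro u u' h1 h2 h3 hne h4 hus hu's
        have husimp : IsSimplicial G u := simplicial_of_not_V0 hstar h4
        have huab : u = a ∨ u = b := by
          by_contra hc
          push_neg at hc
          exact (not_simplicial_of_internal hp hus hc.1 hc.2) husimp
        have huSP : u ∈ S ∪ P := by
          rcases huab with rfl | rfl
          exacts [ha.1, hb.1]
        have huS : u ∈ S := by
          rcases huSP with h | h
          · exact h
          · exfalso
            have : u ∈ Vp 0 := by
              have := h.1.1
              simpa only [Xset, if_pos rfl, if_true] using this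
            exact h4 this
        have hid1 : u ≠ w := h1.ne
        have hid2 : w ≠ u' := h2.ne
        let q : G.Walk u u' := Walk.cons h1 (Walk.cons h2 Walk.nil)
        have hsupq : q.support = [u, w, u'] := rfl
        have hqpath : q.IsPath := by
          rw [Walk.isPath_def, hsupq]
          simp [hid1, hid2, hne]
        have hqind : IsInducedPath G q := by
          refine ⟨hqpath, ?_⟩
          intro i j hi hj hlt
          have hj3 : j < 3 := by simpa [hsupq] using hj
          have hij : i = 0 ∧ j = 2 := by omega
          obtain ⟨rfl, rfl⟩ := hij
          have e1 : q.support.get ⟨0, hi⟩ = u := by simp [hsupq]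
          have e2 : q.support.get ⟨2, hj⟩ = u' := by simp [hsupq]
          rw [e1, e2]
          exact h3
        refine ⟨hwC', u, u', q, hqind, by simp [hsupq], hid1.symm, hid2, huS, husimp,
          h1.symm, hHconv ha.2 hb.2 p hp u' hu's⟩
      by_cases hxV : x ∈ Vp 0
      · have hyV : y ∉ Vp 0 := fun h => hxy (hstar.cliques 0 hxV h hxney)
        exact Or.inr (main y x hwy.symm hxw.symm (fun h => hxy h.symm) hxney.symm hyV hys hxs)
      · exact Or.inr (main x y hxw hwy hxy hxney hxV hxs hys)
  obtain ⟨hv1, hv2⟩ := hv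
  rcases (key hv1).1 with h | h
  · exact absurd h hv2
  · exact h
end

section
/- Let G be a starlike graph with clique partition (V_0, V_1, …, V_t) and let S be an m-convexly independent set of G. If there are edges u·v and u'·v' of G with u, u' ∈ S ∩ C'_0, v ∈ S ∩ C_i and v' ∈ S ∩ C_j for some i, j ∈ {0, 1, …, t}, then i = j. -/
open SimpleGraph

variable {V : Type*}

section Aux

variable {G : SimpleGraph V} {t : ℕ} {Vp : Fin (t+1) → Set V}

lemma adj_mem_closedNbhd {a b : V} (h : G.Adj a b) : b ∈ closedNbhd G a :=
  Set.mem_insert_iff.mpr (Or.inr h)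

lemma self_mem_closedNbhd (a : V) : a ∈ closedNbhd G a := Set.mem_insert _ _

/-- A simplicial vertex of `V₀` has all its neighbours in `V₀`. -/
lemma aux_A (hstar : IsStarlikePartition G t Vp) {v w : V} (hv0 : v ∈ Vp 0)
    (hvs : IsSimplicial G v) (hadj : G.Adj v w) : w ∈ Vp 0 := by
  have hsub : Vp 0 ⊆ closedNbhd G v := by
    intro x hx
    by_cases hxv : x = v
    · subst hxv; exact self_mem_closedNbhd x
    · exact adj_mem_closedNbhd (hstar.cliques 0 hv0 hx (fun h => hxv h.symm))
  have hclique : G.IsClique (insert w (Vp 0)) := by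
    intro a ha b hb hab
    have ha' : a ∈ closedNbhd G v := by
      rcases ha with rfl | ha
      · exact adj_mem_closedNbhd hadj
      · exact hsub ha
    have hb' : b ∈ closedNbhd G v := by
      rcases hb with rfl | hb
      · exact adj_mem_closedNbhd hadj
      · exact hsub hb
    exact hvs a ha' b hb' hab
  exact hstar.maximal _ hclique (Set.subset_insert _ _) (Set.mem_insert _ _)

/-- A simplicial vertex of `X_i` (`i ≠ 0`) belongs to `V_i`. -/
lemma aux_B (hstar : IsStarlikePartition G t Vp) {i : Fin (t+1)} (hi : i ≠ 0) {v : V}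
    (hvX : v ∈ Xset G Vp i) (hvs : IsSimplicial G v) : v ∈ Vp i := by
  rw [Xset, if_neg hi] at hvX
  simp only [Set.mem_iUnion] at hvX
  obtain ⟨w, hw, hvw⟩ := hvX
  rcases Set.mem_insert_iff.mp hvw with rfl | hvw
  · exact hw
  · -- G.Adj w v
    have hadj : G.Adj v w := (G.adj_symm hvw)
    obtain ⟨k, hk⟩ := hstar.covers v
    by_cases hki : k = i
    · exact hki ▸ hk
    by_cases hk0 : k = 0
    · -- v ∈ V₀ simplicial adjacent to w ∈ Vᵢ : contradiction
      have hw0 : w ∈ Vp 0 := aux_A hstar (hk0 ▸ hk) hvs hadj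
      exact absurd (Set.disjoint_left.mp (hstar.disjoint i 0 hi) hw hw0) not_false
    · -- w ∈ N[v] \ V_k ⊆ V₀, but w ∈ Vᵢ
      have hw0 : w ∈ Vp 0 := hstar.nbhd_sub k hk0 v hk
        ⟨adj_mem_closedNbhd hadj, fun hwk =>
          Set.disjoint_left.mp (hstar.disjoint i k (fun h => hki h.symm)) hw hwk⟩
      exact absurd (Set.disjoint_left.mp (hstar.disjoint i 0 hi) hw hw0) not_false

/-- Membership in `C_i` and `X_j` forces `i = j`. -/
lemma aux_C (hstar : IsStarlikePartition G t Vp) {i j : Fin (t+1)} {v : V}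
    (hvC : v ∈ Cset G Vp i) (hvX : v ∈ Xset G Vp j) : i = j := by
  obtain ⟨hvXi, hvZ⟩ := hvC
  by_cases hi : i = 0 <;> by_cases hj : j = 0
  · exact hi.trans hj.symm
  · -- i = 0, j ≠ 0
    have hvj : v ∈ Vp j := aux_B hstar hj hvX hvZ
    have hv0 : v ∈ Vp 0 := by rw [Xset, if_pos hi] at hvXi; exact hvXi
    exact absurd (Set.disjoint_left.mp (hstar.disjoint 0 j (fun h => hj h.symm)) hv0 hvj) not_false
  · -- i ≠ 0, j = 0
    have hvi : v ∈ Vp i := aux_B hstar hi hvXi hvZ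
    have hv0 : v ∈ Vp 0 := by rw [Xset, if_pos hj] at hvX; exact hvX
    exact absurd (Set.disjoint_left.mp (hstar.disjoint 0 i (fun h => hi h.symm)) hv0 hvi) not_false
  · have hvi : v ∈ Vp i := aux_B hstar hi hvXi hvZ
    have hvj : v ∈ Vp j := aux_B hstar hj hvX hvZ
    by_contra hij
    exact Set.disjoint_left.mp (hstar.disjoint i j hij) hvi hvj

/-- Vertices of `C_i` and `C_j` with `i ≠ j` are non-adjacent. -/
lemma aux_nonadj (hstar : IsStarlikePartition G t Vp) {i j : Fin (t+1)} (hij : i ≠ j)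
    {v v' : V} (hvC : v ∈ Cset G Vp i) (hv'C : v' ∈ Cset G Vp j) : ¬ G.Adj v v' := by
  intro hadj
  apply hij
  by_cases hi : i = 0
  · -- v ∈ V₀ simplicial, so v' ∈ V₀ = X₀
    have hv0 : v ∈ Vp 0 := by
      have := hvC.1; rw [Xset, if_pos hi] at this; exact this
    have hv'0 : v' ∈ Vp 0 := aux_A hstar hv0 hvC.2 hadj
    have : v' ∈ Xset G Vp i := by rw [Xset, if_pos hi]; exact hv'0
    exact ((aux_C hstar hv'C this).symm)
  · have hvi : v ∈ Vp i := aux_B hstar hi hvC.1 hvC.2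
    have : v' ∈ Xset G Vp i := by
      rw [Xset, if_neg hi]
      exact Set.mem_biUnion hvi (adj_mem_closedNbhd hadj)
    exact ((aux_C hstar hv'C this).symm)

/-- A vertex of `C'₀` is distinct from any simplicial vertex. -/
lemma aux_ne {u v : V} (hu : u ∈ Cset' G Vp 0) (hv : v ∈ simplicialSet G) : u ≠ v := by
  rintro rfl
  exact hu.2 ⟨hu.1, hv⟩

/-- If `x` lies on an induced path between two vertices of `S`, then
`x` is in the monophonic hull of `S`. -/
lemma mem_monoHull_of_path {S : Set V} {a b x : V} (ha : a ∈ S) (hb : b ∈ S)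
    (p : G.Walk a b) (hp : IsInducedPath G p) (hx : x ∈ p.support) :
    x ∈ monoHull G S :=
  Set.mem_sInter.mpr fun _T hT => hT.2 (hT.1 ha) (hT.1 hb) p hp x hx

/-- A path `a-b-c` with `a,c` non-adjacent is an induced path. -/
lemma induced_two {a b c : V} (hab : G.Adj a b) (hbc : G.Adj b c)
    (hac : ¬ G.Adj a c) (hne : a ≠ c) :
    IsInducedPath G (Walk.cons hab (Walk.cons hbc Walk.nil)) := by
  constructor
  · rw [Walk.isPath_def]
    simp [hab.ne, hbc.ne, hne]
  · intro i' j' hi hj hlt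
    simp only [Walk.support_cons, Walk.support_nil, List.length_cons,
      List.length_singleton, List.length_nil] at hi hj
    obtain ⟨rfl, rfl⟩ : i' = 0 ∧ j' = 2 := by omega
    simpa using hac

/-- A path `a-b-c-d` with all non-consecutive pairs non-adjacent is an induced path. -/
lemma induced_three {a b c d : V} (hab : G.Adj a b) (hbc : G.Adj b c) (hcd : G.Adj c d)
    (hac : ¬ G.Adj a c) (had : ¬ G.Adj a d) (hbd : ¬ G.Adj b d)
    (hnac : a ≠ c) (hnad : a ≠ d) (hnbd : b ≠ d) :
    IsInducedPath G (Walk.cons hab (Walk.cons hbc (Walk.cons hcd Walk.nil))) := by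
  constructor
  · rw [Walk.isPath_def]
    simp [hab.ne, hbc.ne, hcd.ne, hnac, hnad, hnbd]
  · intro i' j' hi hj hlt
    simp only [Walk.support_cons, Walk.support_nil, List.length_cons,
      List.length_singleton, List.length_nil] at hi hj
    rcases (by omega : (i' = 0 ∧ j' = 2) ∨ (i' = 0 ∧ j' = 3) ∨ (i' = 1 ∧ j' = 3)) with
      ⟨rfl, rfl⟩ | ⟨rfl, rfl⟩ | ⟨rfl, rfl⟩
    · simpa using hac
    · simpa using had
    · simpa using hbd

end Aux

/-- if `S` is m-convexly independent in a starlike graph and there are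
edges `u·v` and `u'·v'` with `u, u' ∈ S ∩ C'_0`, `v ∈ S ∩ C_i`, `v' ∈ S ∩ C_j`,
then `i = j`. -/
theorem statement10 [Fintype V] (G : SimpleGraph V) (t : ℕ) (Vp : Fin (t+1) → Set V)
    (hstar : IsStarlikePartition G t Vp) (S : Set V) (hS : MConvexIndep G S)
    (i j : Fin (t+1)) (u u' v v' : V)
    (hu : u ∈ S ∩ Cset' G Vp 0) (hu' : u' ∈ S ∩ Cset' G Vp 0)
    (hv : v ∈ S ∩ Cset G Vp i) (hv' : v' ∈ S ∩ Cset G Vp j)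
    (huv : G.Adj u v) (hu'v' : G.Adj u' v') :
    i = j := by
  by_contra hij
  obtain ⟨huS, huC⟩ := hu
  obtain ⟨hu'S, hu'C⟩ := hu'
  obtain ⟨hvS, hvC⟩ := hv
  obtain ⟨hv'S, hv'C⟩ := hv'
  -- basic distinctness and non-adjacency facts
  have hvv' : ¬ G.Adj v v' := aux_nonadj hstar hij hvC hv'C
  have hvv'ne : v ≠ v' := by
    rintro rfl
    exact hij (aux_C hstar hvC hv'C.1)
  have huvne : u ≠ v := aux_ne huC hvC.2
  have huv'ne : u ≠ v' := aux_ne huC hv'C.2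
  have hu'vne : u' ≠ v := aux_ne hu'C hvC.2
  have hu'v'ne : u' ≠ v' := aux_ne hu'C hv'C.2
  have hvmem : v ∈ S \ {u} := ⟨hvS, fun h => huvne (Set.mem_singleton_iff.mp h).symm⟩
  have hv'memu : v' ∈ S \ {u} := ⟨hv'S, fun h => huv'ne (Set.mem_singleton_iff.mp h).symm⟩
  have hvmemu' : v ∈ S \ {u'} := ⟨hvS, fun h => hu'vne (Set.mem_singleton_iff.mp h).symm⟩
  have hv'memu' : v' ∈ S \ {u'} := ⟨hv'S, fun h => hu'v'ne (Set.mem_singleton_iff.mp h).symm⟩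
  by_cases h1 : G.Adj u v'
  · -- induced path v - u - v'
    refine hS u huS (mem_monoHull_of_path hvmem hv'memu
      (Walk.cons huv.symm (Walk.cons h1 Walk.nil))
      (induced_two huv.symm h1 hvv' hvv'ne) ?_)
    simp
  by_cases h2 : G.Adj u' v
  · -- induced path v - u' - v'
    refine hS u' hu'S (mem_monoHull_of_path hvmemu' hv'memu'
      (Walk.cons h2.symm (Walk.cons hu'v' Walk.nil))
      (induced_two h2.symm hu'v' hvv' hvv'ne) ?_)
    simp
  -- now u ≠ u' (otherwise u' adj v), and u, u' ∈ V₀ are adjacent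
  have huu'ne : u ≠ u' := by
    rintro rfl
    exact h2 huv
  have huu' : G.Adj u u' := by
    have hu0 : u ∈ Vp 0 := by
      have := huC.1; rw [Xset, if_pos rfl] at this; exact this
    have hu'0 : u' ∈ Vp 0 := by
      have := hu'C.1; rw [Xset, if_pos rfl] at this; exact this
    exact hstar.cliques 0 hu0 hu'0 huu'ne
  -- induced path v - u - u' - v'
  refine hS u huS (mem_monoHull_of_path hvmem hv'memu
    (Walk.cons huv.symm (Walk.cons huu' (Walk.cons hu'v' Walk.nil)))
    (induced_three huv.symm huu' hu'v' (fun h => h2 h.symm) hvv' h1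
      (fun h => hu'vne h.symm) hvv'ne huv'ne) ?_)
  simp
end

section
/- Let G be a starlike graph with clique partition (V_0, V_1, …, V_t) and let S be an m-convexly independent set of G. Suppose there is an edge u·v_i of G with u ∈ S ∩ C'_0 and v_i ∈ S ∩ C_i for some i ∈ {0, 1, …, t}. Then for every vertex v ∈ S ∩ Z, N(v) ∩ C'_0 ⊆ C'_i. -/
open SimpleGraph

variable {V : Type*}

lemma mem_hull_of_path (G : SimpleGraph V) {S : Set V} {a b u : V} (ha : a ∈ S) (hb : b ∈ S)
    (p : G.Walk a b) (hp : IsInducedPath G p) (hu : u ∈ p.support) :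
    u ∈ monoHull G S := by
  intro T hT
  exact hT.2 (hT.1 ha) (hT.1 hb) p hp u hu

lemma inducedPath3 (G : SimpleGraph V) {a b c : V} (hab : G.Adj a b) (hbc : G.Adj b c)
    (hac : ¬ G.Adj a c) (hne : a ≠ c) :
    IsInducedPath G (Walk.cons hab (Walk.cons hbc Walk.nil)) := by
  constructor
  · simp [Walk.isPath_def, hab.ne, hbc.ne, hne]
  · intro i j hi hj hij
    simp only [Walk.support_cons, Walk.support_nil, List.length_cons, List.length_nil] at hi hj ⊢
    interval_cases j <;> interval_cases i <;> simp_all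

lemma inducedPath4 (G : SimpleGraph V) {a b c d : V} (hab : G.Adj a b) (hbc : G.Adj b c)
    (hcd : G.Adj c d) (hac : ¬ G.Adj a c) (had : ¬ G.Adj a d) (hbd : ¬ G.Adj b d)
    (hac' : a ≠ c) (had' : a ≠ d) (hbd' : b ≠ d) :
    IsInducedPath G (Walk.cons hab (Walk.cons hbc (Walk.cons hcd Walk.nil))) := by
  constructor
  · simp [Walk.isPath_def, hab.ne, hbc.ne, hcd.ne, hac', had', hbd']
  · intro i j hi hj hij
    simp only [Walk.support_cons, Walk.support_nil, List.length_cons, List.length_nil] at hi hj ⊢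
    interval_cases j <;> interval_cases i <;>
      first
      | exact hac
      | exact had
      | exact hbd
      | simp_all

lemma closedNbhd_subset_Xset (G : SimpleGraph V) {t : ℕ} {Vp : Fin (t+1) → Set V}
    (hstar : IsStarlikePartition G t Vp) (i : Fin (t+1)) {vi : V}
    (hvi : vi ∈ Cset G Vp i) : closedNbhd G vi ⊆ Xset G Vp i := by
  obtain ⟨hviX, hviZ⟩ := hvi
  by_cases h0 : i = 0
  · subst h0
    have hX0 : Xset G Vp 0 = Vp 0 := by simp [Xset]
    rw [hX0] at hviX ⊢
    apply hstar.maximal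
    · intro x hx y hy hxy
      exact hviZ x hx y hy hxy
    · intro x hx
      by_cases hxv : x = vi
      · subst hxv; exact Set.mem_insert _ _
      · exact Set.mem_insert_of_mem _ ((hstar.cliques 0) hx hviX hxv).symm
  · rw [Xset, if_neg h0] at hviX ⊢
    obtain ⟨s, ⟨u', rfl⟩, hs⟩ := hviX
    simp only [Set.mem_iUnion] at hs
    obtain ⟨hu', hvi'⟩ := hs
    have hu'N : u' ∈ closedNbhd G vi := by
      rcases hvi' with h | h
      · exact h ▸ Set.mem_insert _ _
      · exact Set.mem_insert_of_mem _ (G.adj_symm h)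
    intro x hx
    refine Set.mem_iUnion.2 ⟨u', Set.mem_iUnion.2 ⟨hu', ?_⟩⟩
    by_cases hxu : x = u'
    · exact hxu ▸ Set.mem_insert _ _
    · exact Set.mem_insert_of_mem _ ((hviZ x hx u' hu'N hxu).symm)

/-- if `S` is m-convexly independent in a starlike graph and there is an
edge `u·v_i` with `u ∈ S ∩ C'_0` and `v_i ∈ S ∩ C_i`, then every `v ∈ S ∩ Z` satisfies
`N(v) ∩ C'_0 ⊆ C'_i`. -/
theorem statement11 [Fintype V] (G : SimpleGraph V) (t : ℕ) (Vp : Fin (t+1) → Set V)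
    (hstar : IsStarlikePartition G t Vp) (S : Set V) (hS : MConvexIndep G S)
    (i : Fin (t+1)) (u vi : V)
    (hu : u ∈ S ∩ Cset' G Vp 0) (hvi : vi ∈ S ∩ Cset G Vp i) (huvi : G.Adj u vi)
    (v : V) (hv : v ∈ S ∩ simplicialSet G) :
    G.neighborSet v ∩ Cset' G Vp 0 ⊆ Cset' G Vp i := by
  obtain ⟨huS, huX0, huC0⟩ := hu
  obtain ⟨hviS, hviC⟩ := hvi
  obtain ⟨hvS, hvZ⟩ := hv
  have hX0 : Xset G Vp 0 = Vp 0 := by simp [Xset]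
  have huV0 : u ∈ Vp 0 := hX0 ▸ huX0
  have huZ : u ∉ simplicialSet G := fun h => huC0 ⟨huX0, h⟩
  have hviZ : vi ∈ simplicialSet G := hviC.2
  intro w hw
  obtain ⟨hwv, hwX0, hwC0⟩ := hw
  have hwV0 : w ∈ Vp 0 := hX0 ▸ hwX0
  have hwZ : w ∉ simplicialSet G := fun h => hwC0 ⟨hwX0, h⟩
  suffices hwN : w ∈ closedNbhd G vi by
    have hwX : w ∈ Xset G Vp i := closedNbhd_subset_Xset G hstar i hviC hwN
    exact ⟨hwX, fun hc => hwZ hc.2⟩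
  by_contra hwN
  have hwvi : w ≠ vi := fun h => hwN (h ▸ Set.mem_insert _ _)
  have hwvi' : ¬ G.Adj vi w := fun h => hwN (Set.mem_insert_of_mem _ h)
  have hvvi : v ≠ vi := by
    rintro rfl
    exact hwN (Set.mem_insert_of_mem _ hwv)
  have hvvi' : ¬ G.Adj vi v := by
    intro h
    exact hwvi' (hvZ vi (Set.mem_insert_of_mem _ (G.adj_symm h)) w
      (Set.mem_insert_of_mem _ hwv) (Ne.symm hwvi))
  have huv : u ≠ v := fun h => huZ (h ▸ hvZ)
  have hviu : vi ≠ u := fun h => huZ (h ▸ hviZ)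
  have huv' : ¬ G.Adj u v := by
    intro h
    apply hS u huS
    refine mem_hull_of_path G (u := u) ⟨hviS, hviu⟩ ⟨hvS, huv.symm⟩
      (Walk.cons huvi.symm (Walk.cons h Walk.nil))
      (inducedPath3 G huvi.symm h hvvi' hvvi.symm) ?_
    simp
  have huw : u ≠ w := by
    rintro rfl
    exact hwvi' huvi.symm
  have huw' : G.Adj u w := (hstar.cliques 0) huV0 hwV0 huw
  have hwv' : G.Adj w v := G.adj_symm hwv
  have hwvne : w ≠ v := fun h => hwZ (h ▸ hvZ)
  apply hS u huS
  refine mem_hull_of_path G (u := u) ⟨hviS, hviu⟩ ⟨hvS, huv.symm⟩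
    (Walk.cons huvi.symm (Walk.cons huw' (Walk.cons hwv' Walk.nil)))
    (inducedPath4 G huvi.symm huw' hwv' hwvi'
      hvvi' (fun h => huv' h) hwvi.symm hvvi.symm huv) ?_
  simp
end
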